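/- For λ ≠ 0 and constants c₁ ≠ 0, a ≠ 0, c₂, c₃, the function ψ(θ¹,θ²) = [(θ² - c₁)ln(θ² - c₁) - θ² ln θ²]/(4c₁λ) + (θ¹)²/(2aθ²) + c₂θ² + c₃ satisfies the constant-curvature equation ψ₁₁(ψ₁₁₂ψ₂₂₂ - ψ₁₂₂²) - ψ₁₂(ψ₁₁₁ψ₂₂₂ - ψ₁₁₂ψ₁₂₂) + ψ₂₂(ψ₁₁₁ψ₁₂₂ - ψ₁₁₂²) = 4λ(ψ₁₁ψ₂₂ - ψ₁₂²)² on any open set where θ² > max(0, c₁). -/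

import Mathlib

open Real

noncomputable def pd1 (f : ℝ → ℝ → ℝ) : ℝ → ℝ → ℝ := fun t x => deriv (fun s => f s x) t
noncomputable def pd2 (f : ℝ → ℝ → ℝ) : ℝ → ℝ → ℝ := fun t x => deriv (fun s => f t s) x
noncomputable def p11 (f : ℝ → ℝ → ℝ) : ℝ → ℝ → ℝ := pd1 (pd1 f)
noncomputable def p12 (f : ℝ → ℝ → ℝ) : ℝ → ℝ → ℝ := pd1 (pd2 f)
noncomputable def p22 (f : ℝ → ℝ → ℝ) : ℝ → ℝ → ℝ := pd2 (pd2 f)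
noncomputable def p111 (f : ℝ → ℝ → ℝ) : ℝ → ℝ → ℝ := pd1 (p11 f)
noncomputable def p112 (f : ℝ → ℝ → ℝ) : ℝ → ℝ → ℝ := pd1 (p12 f)
noncomputable def p122 (f : ℝ → ℝ → ℝ) : ℝ → ℝ → ℝ := pd1 (p22 f)
noncomputable def p222 (f : ℝ → ℝ → ℝ) : ℝ → ℝ → ℝ := pd2 (p22 f)

/-- Determinant of the Hessian (Fisher information metric) of a potential function. -/
noncomputable def detg (f : ℝ → ℝ → ℝ) : ℝ → ℝ → ℝ := fun t x =>
  p11 f t x * p22 f t x - (p12 f t x) ^ 2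

/-- The numerator `4 det(g) · R_{1212}` of the curvature of a Hessian metric. -/
noncomputable def Rnum (f : ℝ → ℝ → ℝ) : ℝ → ℝ → ℝ := fun t x =>
  p11 f t x * (p112 f t x * p222 f t x - (p122 f t x) ^ 2)
  - p12 f t x * (p111 f t x * p222 f t x - p112 f t x * p122 f t x)
  + p22 f t x * (p111 f t x * p122 f t x - (p112 f t x) ^ 2)

private lemma hasDerivAt_xlogx {u : ℝ} (hu : u ≠ 0) :
    HasDerivAt (fun y : ℝ => y * Real.log y) (Real.log u + 1) u := by
  have h := (hasDerivAt_id u).mul (Real.hasDerivAt_log hu)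
  refine h.congr_deriv ?_
  field_simp
  simp only [id_eq]
  ring

private lemma hasDerivAt_shift_xlogx {x c1 : ℝ} (h : x - c1 ≠ 0) :
    HasDerivAt (fun s : ℝ => (s - c1) * Real.log (s - c1)) (Real.log (x - c1) + 1) x := by
  have h1 := hasDerivAt_xlogx h
  have h2 : HasDerivAt (fun s : ℝ => s - c1) 1 x := (hasDerivAt_id x).sub_const c1
  have := h1.comp x h2
  simpa [Function.comp_def] using this

set_option maxHeartbeats 2000000 in
/-- The group-invariant solution from `X₈ + aX₆`: for `λ ≠ 0`, `c₁ ≠ 0`, `a ≠ 0`,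
`ψ(θ¹,θ²) = [(θ²-c₁)ln(θ²-c₁) - θ² ln θ²]/(4c₁λ) + (θ¹)²/(2aθ²) + c₂θ² + c₃` satisfies
the constant-curvature equation on any open set where `θ² > max(0, c₁)`. -/
theorem invariant_solution_X8aX6 (lam : ℝ) (hlam : lam ≠ 0) (c1 a c2 c3 : ℝ)
    (hc1 : c1 ≠ 0) (ha : a ≠ 0) :
    let ψ : ℝ → ℝ → ℝ := fun θ1 θ2 =>
      ((θ2 - c1) * Real.log (θ2 - c1) - θ2 * Real.log θ2) / (4 * c1 * lam)
        + θ1 ^ 2 / (2 * a * θ2) + c2 * θ2 + c3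
    ∀ θ1 θ2, max 0 c1 < θ2 →
      Rnum ψ θ1 θ2 = 4 * lam * (detg ψ θ1 θ2) ^ 2 := by
  intro ψ θ1 θ2 hθ
  -- the "good" open set
  set S : Set ℝ := Set.Ioi (max 0 c1) with hS
  have hSopen : IsOpen S := isOpen_Ioi
  have hmem : ∀ s ∈ S, 0 < s ∧ c1 < s := by
    intro s hs
    exact ⟨lt_of_le_of_lt (le_max_left 0 c1) hs, lt_of_le_of_lt (le_max_right 0 c1) hs⟩
  -- first derivative in θ1
  have key1 : ∀ (t s : ℝ), s ≠ 0 → HasDerivAt (fun y => ψ y s) (t / (a * s)) t := by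
    intro t s hs
    have h : HasDerivAt (fun y : ℝ => y ^ 2 / (2 * a * s)) ((2 : ℕ) * t ^ 1 / (2 * a * s)) t :=
      (hasDerivAt_pow 2 t).div_const (2 * a * s)
    have h2 := ((h.const_add (((s - c1) * Real.log (s - c1) - s * Real.log s) /
        (4 * c1 * lam))).add_const (c2 * s)).add_const c3
    refine h2.congr_deriv ?_
    push_cast
    field_simp
  -- first derivative in θ2
  have key2 : ∀ (t s : ℝ), 0 < s → c1 < s → HasDerivAt (fun y => ψ t y)
      ((Real.log (s - c1) - Real.log s) / (4 * c1 * lam) - t ^ 2 / (2 * a * s ^ 2) + c2) s := by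
    intro t s hs0 hsc
    have hs : s ≠ 0 := ne_of_gt hs0
    have hsc' : s - c1 ≠ 0 := ne_of_gt (sub_pos.mpr hsc)
    have hlog : HasDerivAt (fun y : ℝ => ((y - c1) * Real.log (y - c1) - y * Real.log y)
        / (4 * c1 * lam)) ((Real.log (s - c1) + 1 - (Real.log s + 1)) / (4 * c1 * lam)) s :=
      ((hasDerivAt_shift_xlogx hsc').sub (hasDerivAt_xlogx hs)).div_const (4 * c1 * lam)
    have hden : HasDerivAt (fun y : ℝ => 2 * a * y) (2 * a) s := by
      simpa using (hasDerivAt_id s).const_mul (2 * a)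
    have hfrac : HasDerivAt (fun y : ℝ => t ^ 2 / (2 * a * y))
        ((0 * (2 * a * s) - t ^ 2 * (2 * a)) / (2 * a * s) ^ 2) s :=
      (hasDerivAt_const s (t ^ 2)).div hden (by positivity)
    have hlin : HasDerivAt (fun y : ℝ => c2 * y) c2 s := by
      simpa using (hasDerivAt_id s).const_mul c2
    have h := ((hlog.add hfrac).add hlin).add_const c3
    refine h.congr_deriv ?_
    field_simp
    ring
  have hx0 : (0:ℝ) < θ2 := (hmem θ2 hθ).1
  have hxc : c1 < θ2 := (hmem θ2 hθ).2
  have hx : θ2 ≠ 0 := ne_of_gt hx0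
  have hxc' : θ2 - c1 ≠ 0 := ne_of_gt (sub_pos.mpr hxc)
  -- pd1 and pd2 formulas
  have hpd1 : ∀ (t s : ℝ), s ≠ 0 → pd1 ψ t s = t / (a * s) := fun t s hs =>
    (key1 t s hs).deriv
  have hpd2 : ∀ (t s : ℝ), 0 < s → c1 < s → pd2 ψ t s =
      (Real.log (s - c1) - Real.log s) / (4 * c1 * lam) - t ^ 2 / (2 * a * s ^ 2) + c2 :=
    fun t s h0 hc => (key2 t s h0 hc).deriv
  -- p11
  have hp11 : ∀ (t : ℝ), p11 ψ t θ2 = 1 / (a * θ2) := by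
    intro t
    have he : (fun y => pd1 ψ y θ2) = fun y => y / (a * θ2) := funext fun y => hpd1 y θ2 hx
    show deriv (fun y => pd1 ψ y θ2) t = _
    rw [he]
    exact ((hasDerivAt_id t).div_const (a * θ2)).deriv
  -- p12
  have hp12 : ∀ (t : ℝ), p12 ψ t θ2 = -(t / (a * θ2 ^ 2)) := by
    intro t
    have he : (fun y => pd2 ψ y θ2) = fun y =>
        (Real.log (θ2 - c1) - Real.log θ2) / (4 * c1 * lam) - y ^ 2 / (2 * a * θ2 ^ 2) + c2 :=
      funext fun y => hpd2 y θ2 hx0 hxc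
    show deriv (fun y => pd2 ψ y θ2) t = _
    rw [he]
    have h : HasDerivAt (fun y : ℝ =>
        (Real.log (θ2 - c1) - Real.log θ2) / (4 * c1 * lam) - y ^ 2 / (2 * a * θ2 ^ 2) + c2)
        (-((2 : ℕ) * t ^ 1 / (2 * a * θ2 ^ 2))) t :=
      ((((hasDerivAt_pow 2 t).div_const (2 * a * θ2 ^ 2)).const_sub _).add_const c2)
    rw [h.deriv]
    push_cast
    field_simp
  -- p22 at an arbitrary good point (needed for p222)
  have hp22 : ∀ (t s : ℝ), 0 < s → c1 < s → p22 ψ t s =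
      (1 / (s - c1) - 1 / s) / (4 * c1 * lam) + t ^ 2 / (a * s ^ 3) := by
    intro t s hs0 hsc
    have hs : s ≠ 0 := ne_of_gt hs0
    have hsc' : s - c1 ≠ 0 := ne_of_gt (sub_pos.mpr hsc)
    have hev : (fun y => pd2 ψ t y) =ᶠ[nhds s] (fun y =>
        (Real.log (y - c1) - Real.log y) / (4 * c1 * lam) - t ^ 2 / (2 * a * y ^ 2) + c2) := by
      filter_upwards [hSopen.mem_nhds (Set.mem_Ioi.mpr (max_lt hs0 hsc))] with y hy
      exact hpd2 t y (hmem y hy).1 (hmem y hy).2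
    show deriv (fun y => pd2 ψ t y) s = _
    rw [hev.deriv_eq]
    have hlog1 : HasDerivAt (fun y : ℝ => Real.log (y - c1)) ((s - c1)⁻¹) s := by
      have := (Real.hasDerivAt_log hsc').comp s ((hasDerivAt_id s).sub_const c1)
      simpa [Function.comp_def] using this
    have hden : HasDerivAt (fun y : ℝ => 2 * a * y ^ 2) (2 * a * ((2 : ℕ) * s ^ 1)) s :=
      (hasDerivAt_pow 2 s).const_mul (2 * a)
    have hfrac : HasDerivAt (fun y : ℝ => t ^ 2 / (2 * a * y ^ 2))
        ((0 * (2 * a * s ^ 2) - t ^ 2 * (2 * a * ((2 : ℕ) * s ^ 1))) / (2 * a * s ^ 2) ^ 2) s :=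
      (hasDerivAt_const s (t ^ 2)).div hden (by positivity)
    have h := (((hlog1.sub (Real.hasDerivAt_log hs)).div_const (4 * c1 * lam)).sub hfrac).add_const c2
    rw [(show HasDerivAt (fun y : ℝ => (Real.log (y - c1) - Real.log y) / (4 * c1 * lam) - t ^ 2 / (2 * a * y ^ 2) + c2) _ s from h).deriv]
    push_cast
    field_simp
    ring
  -- p111
  have hp111 : p111 ψ θ1 θ2 = 0 := by
    have he : (fun y => p11 ψ y θ2) = fun _ => 1 / (a * θ2) := funext fun y => hp11 y
    show deriv (fun y => p11 ψ y θ2) θ1 = 0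
    rw [he, deriv_const]
  -- p112
  have hp112 : p112 ψ θ1 θ2 = -(1 / (a * θ2 ^ 2)) := by
    have he : (fun y => p12 ψ y θ2) = fun y => -(y / (a * θ2 ^ 2)) := funext fun y => hp12 y
    show deriv (fun y => p12 ψ y θ2) θ1 = _
    rw [he]
    have h : HasDerivAt (fun y : ℝ => -(y / (a * θ2 ^ 2))) (-(1 / (a * θ2 ^ 2))) θ1 := by
      have := ((hasDerivAt_id θ1).div_const (a * θ2 ^ 2)).neg
      exact this
    exact h.deriv
  -- p122
  have hp122 : p122 ψ θ1 θ2 = 2 * θ1 / (a * θ2 ^ 3) := by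
    have he : (fun y => p22 ψ y θ2) = fun y =>
        (1 / (θ2 - c1) - 1 / θ2) / (4 * c1 * lam) + y ^ 2 / (a * θ2 ^ 3) :=
      funext fun y => hp22 y θ2 hx0 hxc
    show deriv (fun y => p22 ψ y θ2) θ1 = _
    rw [he]
    have h := ((hasDerivAt_pow 2 θ1).div_const (a * θ2 ^ 3)).const_add
      ((1 / (θ2 - c1) - 1 / θ2) / (4 * c1 * lam))
    rw [h.deriv]
    push_cast
    ring
  -- p222
  have hp222 : p222 ψ θ1 θ2 =
      (-(1 / (θ2 - c1) ^ 2) + 1 / θ2 ^ 2) / (4 * c1 * lam) - 3 * θ1 ^ 2 / (a * θ2 ^ 4) := by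
    have hev : (fun y => p22 ψ θ1 y) =ᶠ[nhds θ2] (fun y =>
        (1 / (y - c1) - 1 / y) / (4 * c1 * lam) + θ1 ^ 2 / (a * y ^ 3)) := by
      filter_upwards [hSopen.mem_nhds hθ] with y hy
      exact hp22 θ1 y (hmem y hy).1 (hmem y hy).2
    show deriv (fun y => p22 ψ θ1 y) θ2 = _
    rw [hev.deriv_eq]
    have h1 : HasDerivAt (fun y : ℝ => 1 / (y - c1))
        ((0 * (θ2 - c1) - 1 * 1) / (θ2 - c1) ^ 2) θ2 :=
      (hasDerivAt_const θ2 (1:ℝ)).div ((hasDerivAt_id θ2).sub_const c1) hxc'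
    have h2 : HasDerivAt (fun y : ℝ => 1 / y) ((0 * θ2 - 1 * 1) / θ2 ^ 2) θ2 :=
      (hasDerivAt_const θ2 (1:ℝ)).div (hasDerivAt_id θ2) hx
    have hden : HasDerivAt (fun y : ℝ => a * y ^ 3) (a * ((3 : ℕ) * θ2 ^ 2)) θ2 :=
      (hasDerivAt_pow 3 θ2).const_mul a
    have h3 : HasDerivAt (fun y : ℝ => θ1 ^ 2 / (a * y ^ 3))
        ((0 * (a * θ2 ^ 3) - θ1 ^ 2 * (a * ((3 : ℕ) * θ2 ^ 2))) / (a * θ2 ^ 3) ^ 2) θ2 :=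
      (hasDerivAt_const θ2 (θ1 ^ 2)).div hden (by simp [ha, hx, pow_ne_zero])
    have h := (((h1.sub h2).div_const (4 * c1 * lam)).add h3)
    rw [(show HasDerivAt (fun y : ℝ => (1 / (y - c1) - 1 / y) / (4 * c1 * lam) + θ1 ^ 2 / (a * y ^ 3)) _ θ2 from h).deriv]
    push_cast
    field_simp
    ring
  -- assemble
  have h11 := hp11 θ1
  have h12 := hp12 θ1
  have h22 := hp22 θ1 θ2 hx0 hxc
  simp only [Rnum, detg, hp111, hp112, hp122, hp222, h11, h12, h22]
  field_simp
  ring
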